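/- The poset {0,1,2,3}^n with the order ≤_n is order-isomorphic to the disjoint union of 2·4^{n-1} copies of the two-element chain; in particular every element is comparable with exactly one other element. -/

import Mathlib

/-- The order `≤ₙ` on `P_n = {0,1,2,3}^n`. -/
def leFin {n : ℕ} (x y : Fin n → Fin 4) : Prop :=
  x = y ∨
  (∃ l : Fin n, (∀ k, k < l → x k = y k) ∧ x l = 2 ∧ y l = 3 ∧
    ∀ k, l < k → x k = y k ∧ (x k = 0 ∨ x k = 1)) ∨
  (∃ h : 0 < n, x ⟨0, h⟩ = 0 ∧ y ⟨0, h⟩ = 1 ∧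
    ∀ k : Fin n, 1 ≤ (k : ℕ) → x k = y k ∧ (x k = 0 ∨ x k = 1))

/-- The disjoint union of `m` copies of the two-element chain `Bool`. -/
def TwoChains (m : ℕ) := Fin m × Bool

instance (m : ℕ) : PartialOrder (TwoChains m) where
  le a b := a.1 = b.1 ∧ a.2 ≤ b.2
  le_refl a := ⟨rfl, le_refl _⟩
  le_trans a b c h1 h2 := ⟨h1.1.trans h2.1, le_trans h1.2 h2.2⟩
  le_antisymm a b h1 h2 := Prod.ext h1.1 (le_antisymm h1.2 h2.2)

namespace Stmt9

def flip4 : Fin 4 → Fin 4 := ![1, 0, 3, 2]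

lemma flip4_flip4 : ∀ v : Fin 4, flip4 (flip4 v) = v := by decide
lemma flip4_ne : ∀ v : Fin 4, flip4 v ≠ v := by decide
lemma flip4_big : ∀ v : Fin 4, 2 ≤ (flip4 v).val ↔ 2 ≤ v.val := by decide
lemma flip4_parity : ∀ v : Fin 4, ((flip4 v).val % 2 = 1) ↔ ¬ (v.val % 2 = 1) := by decide
lemma lt2_cases : ∀ v : Fin 4, v.val < 2 → v = 0 ∨ v = 1 := by decide
lemma big_even : ∀ v : Fin 4, 2 ≤ v.val → ¬ v.val % 2 = 1 → v = 2 := by decide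

variable {n : ℕ}

def Sx (x : Fin n → Fin 4) : Finset (Fin n) :=
  Finset.univ.filter (fun l => 2 ≤ (x l).val)

def piv (hn : 0 < n) (x : Fin n → Fin 4) : Fin n :=
  if h : (Sx x).Nonempty then (Sx x).max' h else ⟨0, hn⟩

def sig (hn : 0 < n) (x : Fin n → Fin 4) : Fin n → Fin 4 :=
  Function.update x (piv hn x) (flip4 (x (piv hn x)))

def bx (hn : 0 < n) (x : Fin n → Fin 4) : Bool :=
  decide ((x (piv hn x)).val % 2 = 1)

lemma mem_Sx {x : Fin n → Fin 4} {l : Fin n} : l ∈ Sx x ↔ 2 ≤ (x l).val := by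
  simp [Sx]

lemma piv_max (hn : 0 < n) (x : Fin n → Fin 4) (k : Fin n) (hk : piv hn x < k) :
    (x k).val < 2 := by
  by_contra h
  push_neg at h
  have hk' : k ∈ Sx x := mem_Sx.mpr h
  have hne : (Sx x).Nonempty := ⟨k, hk'⟩
  have := Finset.le_max' (Sx x) k hk'
  rw [piv, dif_pos hne] at hk
  exact absurd this (not_le_of_gt hk)

lemma piv_mem (hn : 0 < n) {x : Fin n → Fin 4} (h : (Sx x).Nonempty) :
    2 ≤ (x (piv hn x)).val := by
  rw [piv, dif_pos h]
  exact mem_Sx.mp ((Sx x).max'_mem h)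

lemma piv_eq (hn : 0 < n) {x : Fin n → Fin 4} {l : Fin n}
    (h1 : 2 ≤ (x l).val) (h2 : ∀ k, l < k → (x k).val < 2) : piv hn x = l := by
  have hl : l ∈ Sx x := mem_Sx.mpr h1
  have hne : (Sx x).Nonempty := ⟨l, hl⟩
  rw [piv, dif_pos hne]
  refine le_antisymm ?_ (Finset.le_max' _ _ hl)
  by_contra h
  push_neg at h
  exact absurd (mem_Sx.mp ((Sx x).max'_mem hne)) (not_le_of_gt (h2 _ h))

lemma piv_empty (hn : 0 < n) {x : Fin n → Fin 4} (h : ¬ (Sx x).Nonempty) :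
    piv hn x = ⟨0, hn⟩ := by rw [piv, dif_neg h]

lemma all_small (hn : 0 < n) {x : Fin n → Fin 4} (h : ¬ (Sx x).Nonempty) (k : Fin n) :
    (x k).val < 2 := by
  by_contra hc
  push_neg at hc
  exact h ⟨k, mem_Sx.mpr hc⟩

lemma Sx_sig (hn : 0 < n) (x : Fin n → Fin 4) : Sx (sig hn x) = Sx x := by
  ext l
  simp only [mem_Sx, sig, Function.update_apply]
  by_cases hl : l = piv hn x
  · simp [hl, flip4_big]
  · simp [hl]

lemma piv_sig (hn : 0 < n) (x : Fin n → Fin 4) : piv hn (sig hn x) = piv hn x := by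
  rw [piv, piv, Sx_sig]

lemma sig_apply_piv (hn : 0 < n) (x : Fin n → Fin 4) :
    sig hn x (piv hn x) = flip4 (x (piv hn x)) := by
  rw [sig, Function.update_self]

lemma sig_apply_ne (hn : 0 < n) (x : Fin n → Fin 4) {k : Fin n} (h : k ≠ piv hn x) :
    sig hn x k = x k := by
  rw [sig, Function.update_of_ne h]

lemma sig_sig (hn : 0 < n) (x : Fin n → Fin 4) : sig hn (sig hn x) = x := by
  funext k
  by_cases hk : k = piv hn x
  · subst hk
    have h1 : sig hn (sig hn x) (piv hn x) = flip4 (sig hn x (piv hn x)) := by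
      rw [show piv hn x = piv hn (sig hn x) from (piv_sig hn x).symm, sig_apply_piv, piv_sig]
    rw [h1, sig_apply_piv, flip4_flip4]
  · rw [sig_apply_ne hn _ (by rw [piv_sig]; exact hk), sig_apply_ne hn _ hk]

lemma bx_sig (hn : 0 < n) (x : Fin n → Fin 4) : bx hn (sig hn x) = !bx hn x := by
  rw [bx, bx, piv_sig, sig_apply_piv]
  rcases flip4_parity (x (piv hn x)) with h
  by_cases hp : (x (piv hn x)).val % 2 = 1
  · simp [hp, h.mpr, (h.not.mpr (by simp [hp]) : _)] <;> tauto
  · simp [hp, h.mpr hp]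

lemma sig_ne (hn : 0 < n) (x : Fin n → Fin 4) : sig hn x ≠ x := by
  intro h
  have := congrFun h (piv hn x)
  rw [sig_apply_piv] at this
  exact flip4_ne _ this

end Stmt9

namespace Stmt9

lemma small_even : ∀ v : Fin 4, v.val < 2 → ¬ v.val % 2 = 1 → v = 0 := by decide

variable {n : ℕ}

lemma leFin_iff (hn : 0 < n) (x y : Fin n → Fin 4) :
    leFin x y ↔ x = y ∨ (y = sig hn x ∧ bx hn x = false) := by
  constructor
  · rintro (rfl | ⟨l, hb, hx2, hy3, ha⟩ | ⟨h0, hx0, hy1, ha⟩)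
    · exact Or.inl rfl
    · right
      have hp : piv hn x = l := by
        apply piv_eq hn (by rw [hx2]; decide)
        intro k hk
        rcases (ha k hk).2 with h | h <;> rw [h] <;> decide
      constructor
      · funext k
        by_cases hk : k = l
        · subst hk
          rw [sig, hp, Function.update_self, hx2, hy3]; decide
        · rw [sig_apply_ne hn x (hp ▸ hk)]
          rcases lt_or_gt_of_ne hk with h | h
          · exact (hb k h).symm
          · exact (ha k h).1.symm
      · rw [bx, hp, hx2]; decide
    · right
      have hS : ¬ (Sx x).Nonempty := by
        rintro ⟨l, hl⟩
        rw [mem_Sx] at hl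
        by_cases h1 : 1 ≤ (l : ℕ)
        · rcases (ha l h1).2 with h | h <;> rw [h] at hl <;> simp at hl
        · have hl0 : (l : ℕ) = 0 := by omega
          have : l = ⟨0, h0⟩ := Fin.ext hl0
          rw [this, hx0] at hl; simp at hl
      have hp := piv_empty hn hS
      have h00 : (⟨0, hn⟩ : Fin n) = ⟨0, h0⟩ := rfl
      constructor
      · funext k
        by_cases hk : k = (⟨0, hn⟩ : Fin n)
        · subst hk
          rw [sig, hp, Function.update_self, h00, hx0, hy1]; decide
        · rw [sig_apply_ne hn x (hp ▸ hk)]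
          have h1 : 1 ≤ (k : ℕ) := by
            rcases Nat.eq_zero_or_pos (k : ℕ) with h | h
            · exact absurd (Fin.ext h) hk
            · exact h
          exact (ha k h1).1.symm
      · rw [bx, hp, h00, hx0]; decide
  · rintro (rfl | ⟨rfl, hbx⟩)
    · exact Or.inl rfl
    · have hpar : ¬ (x (piv hn x)).val % 2 = 1 := of_decide_eq_false hbx
      by_cases hne : (Sx x).Nonempty
      · right; left
        have hx2 : x (piv hn x) = 2 := big_even _ (piv_mem hn hne) hpar
        refine ⟨piv hn x, ?_, hx2, ?_, ?_⟩
        · intro k hk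
          exact (sig_apply_ne hn x (ne_of_lt hk)).symm
        · rw [sig_apply_piv, hx2]; decide
        · intro k hk
          exact ⟨(sig_apply_ne hn x (ne_of_gt hk)).symm,
            lt2_cases _ (piv_max hn x k hk)⟩
      · right; right
        have hp := piv_empty hn hne
        have hx0 : x ⟨0, hn⟩ = 0 := by
          apply small_even _ (all_small hn hne _)
          rwa [hp] at hpar
        refine ⟨hn, hx0, ?_, ?_⟩
        · have := sig_apply_piv hn x
          rw [hp, hx0] at this
          rw [this]; decide
        · intro k hk
          have hkne : k ≠ piv hn x := by
            rw [hp]; intro h; rw [h] at hk; simp at hk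
          exact ⟨(sig_apply_ne hn x hkne).symm, lt2_cases _ (all_small hn hne k)⟩

end Stmt9


/-- `({0,1,2,3}^n, ≤ₙ)` is order-isomorphic to the disjoint union of
`2·4^{n-1}` two-element chains; in particular every element is comparable with
exactly one other element. -/
theorem stmt_9 (n : ℕ) (hn : 1 ≤ n) :
    (∃ e : (Fin n → Fin 4) ≃ TwoChains (2 * 4 ^ (n - 1)),
      ∀ x y : Fin n → Fin 4, leFin x y ↔ e x ≤ e y) ∧
    ∀ x : Fin n → Fin 4, ∃! y : Fin n → Fin 4, y ≠ x ∧ (leFin x y ∨ leFin y x) := by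
  have hn0 : 0 < n := hn
  constructor
  · -- order isomorphism
    classical
    set m := 2 * 4 ^ (n - 1) with hm
    let Low := {x : Fin n → Fin 4 // Stmt9.bx hn0 x = false}
    let low : (Fin n → Fin 4) → Low := fun x =>
      if h : Stmt9.bx hn0 x = false then ⟨x, h⟩
      else ⟨Stmt9.sig hn0 x, by
        rw [Stmt9.bx_sig]
        simp only [Bool.not_eq_false] at h
        simp [h]⟩
    have low_false : ∀ x (h : Stmt9.bx hn0 x = false), low x = ⟨x, h⟩ := by
      intro x h; simp only [low, dif_pos h]
    have low_true : ∀ x, Stmt9.bx hn0 x = true → (low x).val = Stmt9.sig hn0 x := by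
      intro x h; simp only [low, dif_neg (by simp [h] : ¬ Stmt9.bx hn0 x = false)]
    let E : (Fin n → Fin 4) ≃ Low × Bool :=
      { toFun := fun x => (low x, Stmt9.bx hn0 x)
        invFun := fun p => if p.2 then Stmt9.sig hn0 p.1.val else p.1.val
        left_inv := by
          intro x
          cases hb : Stmt9.bx hn0 x with
          | false => simp [low_false x hb, hb]
          | true => simp [low_true x hb, hb, Stmt9.sig_sig]
        right_inv := by
          rintro ⟨⟨v, hv⟩, bb⟩
          cases bb with
          | false => simp [low_false v hv, hv]
          | true =>
            have hb : Stmt9.bx hn0 (Stmt9.sig hn0 v) = true := by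
              rw [Stmt9.bx_sig, hv]; rfl
            have : (low (Stmt9.sig hn0 v)).val = v := by
              rw [low_true _ hb, Stmt9.sig_sig]
            simp only [Prod.mk.injEq]
            exact ⟨Subtype.ext this, hb⟩ }
    have hcard : Fintype.card Low = m := by
      have h1 : Fintype.card (Fin n → Fin 4) = Fintype.card (Low × Bool) :=
        Fintype.card_congr E
      rw [Fintype.card_prod, Fintype.card_bool, Fintype.card_fun] at h1
      simp only [Fintype.card_fin] at h1
      have h4 : (4 : ℕ) ^ n = m * 2 := by
        rw [hm]
        conv_lhs => rw [show n = (n - 1) + 1 by omega]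
        ring
      exact Nat.eq_of_mul_eq_mul_right (by norm_num) (h1.symm.trans h4)
    let g : Low ≃ Fin m := Fintype.equivFinOfCardEq hcard
    refine ⟨E.trans ((g.prodCongr (Equiv.refl Bool)) :
      Low × Bool ≃ TwoChains m), ?_⟩
    intro x y
    rw [Stmt9.leFin_iff hn0]
    have hle : ∀ a b : TwoChains m, a ≤ b ↔ a.1 = b.1 ∧ a.2 ≤ b.2 :=
      fun a b => Iff.rfl
    rw [hle]
    show _ ↔ (g (low x) = g (low y) ∧ Stmt9.bx hn0 x ≤ Stmt9.bx hn0 y)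
    rw [g.injective.eq_iff]
    constructor
    · rintro (rfl | ⟨rfl, hbx⟩)
      · exact ⟨rfl, le_refl _⟩
      · have hbs : Stmt9.bx hn0 (Stmt9.sig hn0 x) = true := by
          rw [Stmt9.bx_sig, hbx]; rfl
        refine ⟨?_, by rw [hbx]; exact Bool.false_le _⟩
        rw [low_false x hbx]
        exact Subtype.ext (by rw [low_true _ hbs, Stmt9.sig_sig])
    · rintro ⟨h1, h2⟩
      by_cases hxy : x = y
      · exact Or.inl hxy
      right
      have hbne : Stmt9.bx hn0 x ≠ Stmt9.bx hn0 y := by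
        intro hbeq
        exact hxy (E.injective (Prod.ext h1 hbeq))
      have hbx : Stmt9.bx hn0 x = false := by
        cases hx : Stmt9.bx hn0 x with
        | false => rfl
        | true =>
          exfalso
          rw [hx] at h2
          cases hy : Stmt9.bx hn0 y with
          | false => rw [hy] at h2; exact absurd h2 (by decide)
          | true => exact hbne (hx.trans hy.symm)
      have hby : Stmt9.bx hn0 y = true := by
        cases hy : Stmt9.bx hn0 y with
        | true => rfl
        | false => exact absurd (hbx.trans hy.symm) hbne
      refine ⟨?_, hbx⟩
      have : (low y).val = Stmt9.sig hn0 y := low_true y hby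
      rw [← h1, low_false x hbx] at this
      rw [← Stmt9.sig_sig hn0 y, ← this]
  · -- unique comparable partner
    intro x
    refine ⟨Stmt9.sig hn0 x, ⟨Stmt9.sig_ne hn0 x, ?_⟩, ?_⟩
    · cases hb : Stmt9.bx hn0 x with
      | false => exact Or.inl ((Stmt9.leFin_iff hn0 x _).mpr (Or.inr ⟨rfl, hb⟩))
      | true =>
        refine Or.inr ((Stmt9.leFin_iff hn0 _ x).mpr (Or.inr ⟨?_, ?_⟩))
        · exact (Stmt9.sig_sig hn0 x).symm
        · rw [Stmt9.bx_sig, hb]; rfl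
    · rintro y ⟨hne, hcomp | hcomp⟩
      · rcases (Stmt9.leFin_iff hn0 x y).mp hcomp with rfl | ⟨h, -⟩
        · exact absurd rfl hne
        · exact h
      · rcases (Stmt9.leFin_iff hn0 y x).mp hcomp with rfl | ⟨h, -⟩
        · exact absurd rfl hne
        · rw [h, Stmt9.sig_sig]
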